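/- Let 1/2 ≤ σ ≤ 1 and let f : {0,1}^n → ℝ₊ be a monotone, sub-additive, 1-Lipschitz function with f(0,…,0) = 0 and f(1,…,1) = r. Then Pr_{x~π_σ^n}[f(x) ≤ r/6] ≤ √2 · 2^{−r/12}. -/
import Mathlib


/-- The weight of a point `x ∈ {0,1}^n` under the product distribution `π_σ^n`. -/
noncomputable def cubeWeight (n : ℕ) (σ : ℝ) (x : Fin n → Bool) : ℝ :=
  ∏ i, if x i then σ else 1 - σ

open Classical in
/-- The probability of the event `E` under the product distribution `π_σ^n` on `{0,1}^n`,
where each coordinate is independently `1` with probability `σ`. -/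
noncomputable def cubePr (n : ℕ) (σ : ℝ) (E : (Fin n → Bool) → Prop) : ℝ :=
  ∑ x : Fin n → Bool, if E x then cubeWeight n σ x else 0

/-- `f` is monotone w.r.t. the partial order on `{0,1}^n` given by inclusion of supports. -/
def CubeMonotone {n : ℕ} (f : (Fin n → Bool) → ℝ) : Prop :=
  ∀ x y : Fin n → Bool, (∀ i, x i = true → y i = true) → f x ≤ f y

/-- `f` is sub-additive: `f(x+y) ≤ f(x) + f(y)` whenever `x, y` have disjoint supports. -/
def CubeSubadditive {n : ℕ} (f : (Fin n → Bool) → ℝ) : Prop :=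
  ∀ x y : Fin n → Bool, (∀ i, ¬(x i = true ∧ y i = true)) →
    f (fun i => x i || y i) ≤ f x + f y

/-- `f` is 1-Lipschitz w.r.t. the Hamming distance on `{0,1}^n`. -/
def CubeLipschitz {n : ℕ} (f : (Fin n → Bool) → ℝ) : Prop :=
  ∀ x y : Fin n → Bool,
    |f x - f y| ≤ ((Finset.univ.filter fun i : Fin n => x i ≠ y i).card : ℝ)


namespace CubeConc

abbrev Cube (n : ℕ) := Fin n → Bool

noncomputable def MU (n : ℕ) (σ : ℝ) (C : Finset (Cube n)) : ℝ :=
  ∑ y : Cube n, if y ∈ C then cubeWeight n σ y else 0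

def cost {n : ℕ} (z y y' : Cube n) : ℕ :=
  (Finset.univ.filter fun i => z i = true ∧ y i = false ∧ y' i = false).card

noncomputable def dd {n : ℕ} (C D : Finset (Cube n)) (z : Cube n) : ℕ :=
  sInf {k | ∃ y ∈ C, ∃ y' ∈ D, cost z y y' = k}

noncomputable def SS (n : ℕ) (σ : ℝ) (C D : Finset (Cube n)) : ℝ :=
  ∑ z : Cube n, cubeWeight n (1 - σ) z * 2 ^ dd C D z

lemma cubeWeight_nonneg {n : ℕ} {σ : ℝ} (h0 : 0 ≤ σ) (h1 : σ ≤ 1) (x : Cube n) :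
    0 ≤ cubeWeight n σ x :=
  Finset.prod_nonneg fun i _ => by by_cases h : x i = true <;> simp [h] <;> linarith

lemma cubeWeight_cons {n : ℕ} (σ : ℝ) (b : Bool) (x : Cube n) :
    cubeWeight (n+1) σ (Fin.cons b x) = (if b then σ else 1 - σ) * cubeWeight n σ x := by
  unfold cubeWeight
  rw [Fin.prod_univ_succ]
  simp

def consEquiv (n : ℕ) : (Bool × Cube n) ≃ Cube (n+1) :=
  ⟨fun p => Fin.cons p.1 p.2, fun z => (z 0, Fin.tail z),
   fun p => by simp [Fin.tail_cons], fun z => by simp [Fin.cons_self_tail]⟩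

lemma sum_cube_succ {n : ℕ} (G : Cube (n+1) → ℝ) :
    ∑ z, G z = (∑ z : Cube n, G (Fin.cons false z)) + ∑ z : Cube n, G (Fin.cons true z) := by
  rw [← Equiv.sum_comp (consEquiv n) G, Fintype.sum_prod_type, Fintype.sum_bool]
  simp only [consEquiv, Equiv.coe_fn_mk]
  exact add_comm _ _

lemma sum_cubeWeight (n : ℕ) (σ : ℝ) : ∑ z : Cube n, cubeWeight n σ z = 1 := by
  induction n with
  | zero => simp [cubeWeight]
  | succ n ih =>
    rw [sum_cube_succ (fun z => cubeWeight (n+1) σ z)]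
    simp only [cubeWeight_cons]
    rw [← Finset.mul_sum, ← Finset.mul_sum, ih]
    simp

lemma cost_cons {n : ℕ} (b b₁ b₂ : Bool) (z y y' : Cube n) :
    cost (Fin.cons b z) (Fin.cons b₁ y) (Fin.cons b₂ y') =
      (if b = true ∧ b₁ = false ∧ b₂ = false then 1 else 0) + cost z y y' := by
  unfold cost
  rw [Finset.card_filter, Finset.card_filter, Fin.sum_univ_succ]
  simp

lemma dd_le {n : ℕ} {C D : Finset (Cube n)} {y y' : Cube n} (hy : y ∈ C) (hy' : y' ∈ D)
    (z : Cube n) : dd C D z ≤ cost z y y' :=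
  Nat.sInf_le ⟨y, hy, y', hy', rfl⟩

lemma dd_attain {n : ℕ} {C D : Finset (Cube n)} (hC : C.Nonempty) (hD : D.Nonempty)
    (z : Cube n) : ∃ y ∈ C, ∃ y' ∈ D, cost z y y' = dd C D z := by
  obtain ⟨yc, hyc⟩ := hC; obtain ⟨yd, hyd⟩ := hD
  have hne : {k | ∃ y ∈ C, ∃ y' ∈ D, cost z y y' = k}.Nonempty :=
    ⟨cost z yc yd, yc, hyc, yd, hyd, rfl⟩
  exact Nat.sInf_mem hne

def slice {n : ℕ} (b : Bool) (C : Finset (Cube (n+1))) : Finset (Cube n) :=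
  Finset.univ.filter fun y => Fin.cons b y ∈ C

@[simp] lemma mem_slice {n : ℕ} {b : Bool} {C : Finset (Cube (n+1))} {y : Cube n} :
    y ∈ slice b C ↔ Fin.cons b y ∈ C := by simp [slice]

lemma MU_nonneg {n : ℕ} {σ : ℝ} (h0 : 0 ≤ σ) (h1 : σ ≤ 1) (C : Finset (Cube n)) :
    0 ≤ MU n σ C :=
  Finset.sum_nonneg fun y _ => by
    split
    · exact cubeWeight_nonneg h0 h1 y
    · exact le_refl 0

lemma MU_mono {n : ℕ} {σ : ℝ} (h0 : 0 ≤ σ) (h1 : σ ≤ 1) {C C' : Finset (Cube n)}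
    (h : C ⊆ C') : MU n σ C ≤ MU n σ C' := by
  apply Finset.sum_le_sum
  intro y _
  by_cases hy : y ∈ C
  · rw [if_pos hy, if_pos (h hy)]
  · rw [if_neg hy]
    split
    · exact cubeWeight_nonneg h0 h1 y
    · exact le_refl 0

lemma MU_empty {n : ℕ} (σ : ℝ) : MU n σ (∅ : Finset (Cube n)) = 0 := by
  unfold MU; simp

lemma MU_succ {n : ℕ} (σ : ℝ) (C : Finset (Cube (n+1))) :
    MU (n+1) σ C = (1-σ) * MU n σ (slice false C) + σ * MU n σ (slice true C) := by
  unfold MU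
  rw [sum_cube_succ (fun y => if y ∈ C then cubeWeight (n+1) σ y else 0)]
  rw [Finset.mul_sum, Finset.mul_sum]
  congr 1
  · apply Finset.sum_congr rfl
    intro y _
    rw [cubeWeight_cons]
    by_cases h : Fin.cons false y ∈ C <;> simp [h]
  · apply Finset.sum_congr rfl
    intro y _
    rw [cubeWeight_cons]
    by_cases h : Fin.cons true y ∈ C <;> simp [h]

lemma SS_nonneg {n : ℕ} {σ : ℝ} (h0 : 0 ≤ σ) (h1 : σ ≤ 1) (C D : Finset (Cube n)) :
    0 ≤ SS n σ C D :=
  Finset.sum_nonneg fun z _ =>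
    mul_nonneg (cubeWeight_nonneg (by linarith) (by linarith) z) (by positivity)

lemma SS_succ {n : ℕ} (σ : ℝ) (C D : Finset (Cube (n+1))) :
    SS (n+1) σ C D
      = σ * (∑ z : Cube n, cubeWeight n (1-σ) z * 2 ^ dd C D (Fin.cons false z))
        + (1-σ) * (∑ z : Cube n, cubeWeight n (1-σ) z * 2 ^ dd C D (Fin.cons true z)) := by
  unfold SS
  rw [sum_cube_succ (fun z => cubeWeight (n+1) (1-σ) z * 2 ^ dd C D z)]
  rw [Finset.mul_sum, Finset.mul_sum]
  congr 1
  · apply Finset.sum_congr rfl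
    intro z _
    rw [cubeWeight_cons, if_neg Bool.false_ne_true]
    ring
  · apply Finset.sum_congr rfl
    intro z _
    rw [cubeWeight_cons, if_pos rfl]
    ring


private lemma mul3_le {x x' y y' z z' : ℝ} (hx : x ≤ x') (hy : y ≤ y') (hz : z ≤ z')
    (hy0 : 0 ≤ y) (hz0 : 0 ≤ z) (hx'0 : 0 ≤ x') (hy'0 : 0 ≤ y') :
    x*y*z ≤ x'*y'*z' :=
  mul_le_mul (mul_le_mul hx hy hy0 hx'0) hz hz0 (mul_nonneg hx'0 hy'0)

private lemma L1' {σ b d : ℝ} (hσ : 1/2 ≤ σ) (hσ1 : σ ≤ 1) (hb : 0 < b) (hdb : d ≤ b)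
    (hbd : b ≤ 2*d) : ((1-σ)*b + σ*d)^3 ≤ b^2*d := by
  have hd : 0 < d := by linarith
  have h1 : (1-σ)*b + σ*d ≤ (b+d)/2 := by nlinarith
  have h0 : (0:ℝ) ≤ (1-σ)*b + σ*d := by nlinarith
  have h3 : 0 ≤ d^2 + 4*b*d - b^2 := by nlinarith
  have h2 : ((b+d)/2)^3 ≤ b^2*d := by nlinarith [mul_nonneg (sub_nonneg.mpr hdb) h3]
  calc ((1-σ)*b + σ*d)^3 ≤ ((b+d)/2)^3 := pow_le_pow_left₀ h0 h1 3
    _ ≤ b^2*d := h2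

private lemma core_main {σ a0 a1 bC d0 d1 bD E0 E1 SBB SD1 : ℝ}
    (hσl : 1/2 ≤ σ) (hσu : σ ≤ 1)
    (ha0 : 0 ≤ a0) (ha0b : a0 ≤ bC) (ha1 : 0 ≤ a1)
    (hd0 : 0 ≤ d0) (hd0b : d0 ≤ bD) (hd1 : 0 < d1) (hd1b : d1 ≤ bD)
    (hs : a1 * bD ≤ d1 * bC)
    (hbig : bD ≤ 2 * d1)
    (hE0 : 0 ≤ E0) (hE0le : E0 ≤ SBB) (hE1 : 0 ≤ E1) (hE1le : E1 ≤ SD1)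
    (hSBB : 0 ≤ SBB) (hSD1 : 0 ≤ SD1)
    (hIH : bC * bD * SBB ≤ 1) (hIHD : bC * d1 * SD1 ≤ 1) (hbC : 0 < bC) :
    ((1-σ)*a0 + σ*a1) * ((1-σ)*d0 + σ*d1) * (σ*E0 + (1-σ)*E1) ≤ 1 := by
  have hbD : 0 < bD := lt_of_lt_of_le hd1 hd1b
  have hσ0 : (0:ℝ) ≤ σ := by linarith
  have hσ1' : (0:ℝ) ≤ 1 - σ := by linarith
  have hU0 : (0:ℝ) ≤ (1-σ)*bD + σ*d1 := by positivity
  have k1 : ((1-σ)*a0 + σ*a1) * bD ≤ ((1-σ)*bD + σ*d1) * bC := by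
    have t1 : (1-σ)*(a0*bD) ≤ (1-σ)*(bC*bD) :=
      mul_le_mul_of_nonneg_left (mul_le_mul_of_nonneg_right ha0b hbD.le) hσ1'
    have t2 : σ*(a1*bD) ≤ σ*(d1*bC) := mul_le_mul_of_nonneg_left hs hσ0
    nlinarith [t1, t2]
  have k2 : (1-σ)*d0 + σ*d1 ≤ (1-σ)*bD + σ*d1 := by
    nlinarith [mul_le_mul_of_nonneg_left hd0b hσ1']
  have k3 : (σ*E0 + (1-σ)*E1) * (bC*bD*d1) ≤ (1-σ)*bD + σ*d1 := by
    have t1 : σ*d1*(E0*(bC*bD)) ≤ σ*d1*(SBB*(bC*bD)) :=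
      mul_le_mul_of_nonneg_left
        (mul_le_mul_of_nonneg_right hE0le (by positivity)) (by positivity)
    have t2 : (1-σ)*bD*(E1*(bC*d1)) ≤ (1-σ)*bD*(SD1*(bC*d1)) :=
      mul_le_mul_of_nonneg_left
        (mul_le_mul_of_nonneg_right hE1le (by positivity)) (by positivity)
    have t1' : σ*d1*(bC*bD*SBB) ≤ σ*d1*1 :=
      mul_le_mul_of_nonneg_left hIH (by positivity)
    have t2' : (1-σ)*bD*(bC*d1*SD1) ≤ (1-σ)*bD*1 :=
      mul_le_mul_of_nonneg_left hIHD (by positivity)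
    nlinarith [t1, t2, t1', t2']
  have hpos : (0:ℝ) < bC*bD^2*d1 := by positivity
  have big : (((1-σ)*a0 + σ*a1) * ((1-σ)*d0 + σ*d1) * (σ*E0 + (1-σ)*E1)) * (bC*bD^2*d1)
      ≤ ((1-σ)*bD + σ*d1)^3 * bC := by
    have h := mul3_le k1 k2 k3
      (by positivity) (by positivity) (by positivity) hU0
    calc (((1-σ)*a0 + σ*a1) * ((1-σ)*d0 + σ*d1) * (σ*E0 + (1-σ)*E1)) * (bC*bD^2*d1)
        = (((1-σ)*a0 + σ*a1) * bD) * ((1-σ)*d0 + σ*d1) * ((σ*E0 + (1-σ)*E1) * (bC*bD*d1)) := by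
          ring
      _ ≤ (((1-σ)*bD + σ*d1) * bC) * ((1-σ)*bD + σ*d1) * ((1-σ)*bD + σ*d1) := h
      _ = ((1-σ)*bD + σ*d1)^3 * bC := by ring
  have hL1 : ((1-σ)*bD + σ*d1)^3 ≤ bD^2*d1 := L1' hσl hσu hbD hd1b hbig
  have hfin : (((1-σ)*a0 + σ*a1) * ((1-σ)*d0 + σ*d1) * (σ*E0 + (1-σ)*E1)) * (bC*bD^2*d1)
      ≤ 1 * (bC*bD^2*d1) := by
    calc _ ≤ ((1-σ)*bD + σ*d1)^3 * bC := big
      _ ≤ (bD^2*d1) * bC := mul_le_mul_of_nonneg_right hL1 hbC.le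
      _ = 1 * (bC*bD^2*d1) := by ring
  exact le_of_mul_le_mul_right (by linarith) hpos

private lemma core_small {σ a0 a1 bC d0 d1 bD E0 E1 SBB : ℝ}
    (hσl : 1/2 ≤ σ) (hσu : σ ≤ 1)
    (ha0 : 0 ≤ a0) (ha0b : a0 ≤ bC) (ha1 : 0 ≤ a1) (h2a : 2*a1 ≤ bC)
    (hd0 : 0 ≤ d0) (hd0b : d0 ≤ bD) (hd1 : 0 ≤ d1) (h2d : 2*d1 ≤ bD)
    (hE0 : 0 ≤ E0) (hE0le : E0 ≤ SBB) (hE1 : 0 ≤ E1) (hE1le : E1 ≤ 2*SBB)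
    (hSBB : 0 ≤ SBB) (hIH : bC * bD * SBB ≤ 1) :
    ((1-σ)*a0 + σ*a1) * ((1-σ)*d0 + σ*d1) * (σ*E0 + (1-σ)*E1) ≤ 1 := by
  have hσ0 : (0:ℝ) ≤ σ := by linarith
  have hσ1' : (0:ℝ) ≤ 1 - σ := by linarith
  have hbC : (0:ℝ) ≤ bC := by linarith
  have hbD : (0:ℝ) ≤ bD := by linarith
  have hu0 : (0:ℝ) ≤ 2 - σ := by linarith
  have k1 : (1-σ)*a0 + σ*a1 ≤ ((2-σ)/2)*bC := by
    nlinarith [mul_le_mul_of_nonneg_left ha0b hσ1', mul_le_mul_of_nonneg_left h2a hσ0]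
  have k2 : (1-σ)*d0 + σ*d1 ≤ ((2-σ)/2)*bD := by
    nlinarith [mul_le_mul_of_nonneg_left hd0b hσ1', mul_le_mul_of_nonneg_left h2d hσ0]
  have k3 : σ*E0 + (1-σ)*E1 ≤ (2-σ)*SBB := by
    nlinarith [mul_le_mul_of_nonneg_left hE0le hσ0, mul_le_mul_of_nonneg_left hE1le hσ1']
  have n1 : (0:ℝ) ≤ (1-σ)*d0 + σ*d1 := by positivity
  have n2 : (0:ℝ) ≤ σ*E0 + (1-σ)*E1 := by positivity
  have n3 : (0:ℝ) ≤ ((2-σ)/2)*bC := mul_nonneg (by linarith) hbC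
  have n4 : (0:ℝ) ≤ ((2-σ)/2)*bD := mul_nonneg (by linarith) hbD
  have h := mul3_le k1 k2 k3 n1 n2 n3 n4
  have e2 : ((2-σ)^3/4) * (bC*bD*SBB) ≤ ((2-σ)^3/4) * 1 :=
    mul_le_mul_of_nonneg_left hIH (div_nonneg (pow_nonneg hu0 3) (by norm_num))
  have e3 : ((2-σ)^3/4) ≤ 27/32 := by
    nlinarith [mul_nonneg (mul_nonneg (by linarith : (0:ℝ) ≤ 3/2 - (2-σ)) hu0) hu0]
  calc ((1-σ)*a0 + σ*a1) * ((1-σ)*d0 + σ*d1) * (σ*E0 + (1-σ)*E1)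
      ≤ (((2-σ)/2)*bC) * (((2-σ)/2)*bD) * ((2-σ)*SBB) := h
    _ = ((2-σ)^3/4) * (bC*bD*SBB) := by ring
    _ ≤ 1 := by linarith

private lemma core_empty {σ a0 a1 bC d0 d1 bD E0 E1 SBB : ℝ}
    (hσl : 1/2 ≤ σ) (hσu : σ ≤ 1)
    (ha0 : 0 ≤ a0) (ha0b : a0 ≤ bC) (ha1 : a1 = 0)
    (hd0 : 0 ≤ d0) (hd0b : d0 ≤ bD) (hd1 : 0 ≤ d1) (hd1b : d1 ≤ bD)
    (hE0 : 0 ≤ E0) (hE0le : E0 ≤ SBB) (hE1 : 0 ≤ E1) (hE1le : E1 ≤ 2*SBB)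
    (hSBB : 0 ≤ SBB) (hIH : bC * bD * SBB ≤ 1) :
    ((1-σ)*a0 + σ*a1) * ((1-σ)*d0 + σ*d1) * (σ*E0 + (1-σ)*E1) ≤ 1 := by
  have hσ0 : (0:ℝ) ≤ σ := by linarith
  have hσ1' : (0:ℝ) ≤ 1 - σ := by linarith
  have hbC : (0:ℝ) ≤ bC := by linarith
  have hbD : (0:ℝ) ≤ bD := by linarith
  have k1 : (1-σ)*a0 + σ*a1 ≤ (1-σ)*bC := by
    rw [ha1]; nlinarith [mul_le_mul_of_nonneg_left ha0b hσ1']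
  have k2 : (1-σ)*d0 + σ*d1 ≤ bD := by
    nlinarith [mul_le_mul_of_nonneg_left hd0b hσ1', mul_le_mul_of_nonneg_left hd1b hσ0]
  have k3 : σ*E0 + (1-σ)*E1 ≤ (2-σ)*SBB := by
    nlinarith [mul_le_mul_of_nonneg_left hE0le hσ0, mul_le_mul_of_nonneg_left hE1le hσ1']
  have n1 : (0:ℝ) ≤ (1-σ)*d0 + σ*d1 := by positivity
  have n2 : (0:ℝ) ≤ σ*E0 + (1-σ)*E1 := by positivity
  have n3 : (0:ℝ) ≤ (1-σ)*bC := mul_nonneg hσ1' hbC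
  have h := mul3_le k1 k2 k3 n1 n2 n3 hbD
  have e2 : ((1-σ)*(2-σ)) * (bC*bD*SBB) ≤ ((1-σ)*(2-σ)) * 1 :=
    mul_le_mul_of_nonneg_left hIH (mul_nonneg hσ1' (by linarith))
  have e3 : (1-σ)*(2-σ) ≤ 3/4 := by nlinarith
  calc ((1-σ)*a0 + σ*a1) * ((1-σ)*d0 + σ*d1) * (σ*E0 + (1-σ)*E1)
      ≤ ((1-σ)*bC) * bD * ((2-σ)*SBB) := h
    _ = ((1-σ)*(2-σ)) * (bC*bD*SBB) := by ring
    _ ≤ 1 := by linarith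

private lemma core {σ a0 a1 bC d0 d1 bD E0 E1 SBB SC1 SD1 : ℝ}
    (hσl : 1/2 ≤ σ) (hσu : σ ≤ 1)
    (ha0 : 0 ≤ a0) (ha1 : 0 ≤ a1) (hd0 : 0 ≤ d0) (hd1 : 0 ≤ d1)
    (ha0b : a0 ≤ bC) (ha1b : a1 ≤ bC) (hd0b : d0 ≤ bD) (hd1b : d1 ≤ bD)
    (hE0 : 0 ≤ E0) (hE1 : 0 ≤ E1) (hSBB : 0 ≤ SBB)
    (hE0le : E0 ≤ SBB) (hE1le2 : E1 ≤ 2*SBB)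
    (hIH : bC * bD * SBB ≤ 1)
    (hC1 : a1 = 0 ∨ (0 ≤ SC1 ∧ E1 ≤ SC1 ∧ a1 * bD * SC1 ≤ 1))
    (hD1 : d1 = 0 ∨ (0 ≤ SD1 ∧ E1 ≤ SD1 ∧ bC * d1 * SD1 ≤ 1)) :
    ((1-σ)*a0 + σ*a1) * ((1-σ)*d0 + σ*d1) * (σ*E0 + (1-σ)*E1) ≤ 1 := by
  have hIH' : bD * bC * SBB ≤ 1 := by rw [show bD*bC*SBB = bC*bD*SBB from by ring]; exact hIH
  rcases eq_or_lt_of_le ha1 with h1 | h1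
  · exact core_empty hσl hσu ha0 ha0b h1.symm hd0 hd0b hd1 hd1b hE0 hE0le hE1 hE1le2 hSBB hIH
  rcases eq_or_lt_of_le hd1 with h2 | h2
  · have hswap := core_empty hσl hσu hd0 hd0b h2.symm ha0 ha0b ha1 ha1b hE0 hE0le hE1 hE1le2
      hSBB hIH'
    calc ((1-σ)*a0 + σ*a1) * ((1-σ)*d0 + σ*d1) * (σ*E0 + (1-σ)*E1)
        = ((1-σ)*d0 + σ*d1) * ((1-σ)*a0 + σ*a1) * (σ*E0 + (1-σ)*E1) := by ring
      _ ≤ 1 := hswap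
  obtain ⟨hSC1, hE1C, hIHC⟩ := hC1.resolve_left h1.ne'
  obtain ⟨hSD1, hE1D, hIHD⟩ := hD1.resolve_left h2.ne'
  have hbC : (0:ℝ) < bC := lt_of_lt_of_le h1 ha1b
  have hbD : (0:ℝ) < bD := lt_of_lt_of_le h2 hd1b
  rcases le_total (a1*bD) (d1*bC) with hcmp | hcmp
  · rcases le_or_gt bD (2*d1) with hbig | hsmall
    · exact core_main hσl hσu ha0 ha0b ha1 hd0 hd0b h2 hd1b hcmp hbig
        hE0 hE0le hE1 hE1D hSBB hSD1 hIH hIHD hbC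
    · have h2d : 2*d1 ≤ bD := hsmall.le
      have h2a : 2*a1 ≤ bC := by
        have step : (2*a1)*bD ≤ bC*bD := by nlinarith
        exact le_of_mul_le_mul_right (by linarith) hbD
      exact core_small hσl hσu ha0 ha0b ha1 h2a hd0 hd0b hd1 h2d
        hE0 hE0le hE1 hE1le2 hSBB hIH
  · rcases le_or_gt bC (2*a1) with hbig | hsmall
    · have hIHC' : bD * a1 * SC1 ≤ 1 := by
        rw [show bD*a1*SC1 = a1*bD*SC1 from by ring]; exact hIHC
      have hswap := core_main hσl hσu hd0 hd0b hd1 ha0 ha0b h1 ha1b hcmp hbig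
        hE0 hE0le hE1 hE1C hSBB hSC1 hIH' hIHC' hbD
      calc ((1-σ)*a0 + σ*a1) * ((1-σ)*d0 + σ*d1) * (σ*E0 + (1-σ)*E1)
          = ((1-σ)*d0 + σ*d1) * ((1-σ)*a0 + σ*a1) * (σ*E0 + (1-σ)*E1) := by ring
        _ ≤ 1 := hswap
    · have h2a : 2*a1 ≤ bC := hsmall.le
      have h2d : 2*d1 ≤ bD := by
        have step : (2*d1)*bC ≤ bD*bC := by nlinarith
        exact le_of_mul_le_mul_right (by linarith) hbC
      exact core_small hσl hσu ha0 ha0b ha1 h2a hd0 hd0b hd1 h2d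
        hE0 hE0le hE1 hE1le2 hSBB hIH


lemma T2 : ∀ (n : ℕ) (σ : ℝ), 1/2 ≤ σ → σ ≤ 1 → ∀ C D : Finset (Cube n),
    C.Nonempty → D.Nonempty → MU n σ C * MU n σ D * SS n σ C D ≤ 1 := by
  intro n
  induction n with
  | zero =>
    intro σ hσl hσu C D hC hD
    obtain ⟨c, hc⟩ := hC
    obtain ⟨d, hd⟩ := hD
    have hcost : ∀ z y y' : Cube 0, cost z y y' = 0 := by
      intro z y y'
      unfold cost
      simp
    have hdd : ∀ z : Cube 0, dd C D z = 0 := fun z =>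
      Nat.le_zero.mp (le_trans (dd_le hc hd z) (by rw [hcost]))
    have hw : ∀ (σ' : ℝ) (z : Cube 0), cubeWeight 0 σ' z = 1 := by
      intro σ' z; unfold cubeWeight; simp
    have hMU : ∀ (E : Finset (Cube 0)), E.Nonempty → MU 0 σ E = 1 := by
      intro E hE
      obtain ⟨e, he⟩ := hE
      have hEu : E = Finset.univ := Finset.eq_univ_of_forall (fun x => Subsingleton.elim e x ▸ he)
      unfold MU
      rw [hEu]
      simp only [Finset.mem_univ, if_true]
      exact sum_cubeWeight 0 σ
    have hSS : SS 0 σ C D = 1 := by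
      unfold SS
      simp only [hdd, pow_zero, mul_one]
      exact sum_cubeWeight 0 (1-σ)
    rw [hMU C ⟨c, hc⟩, hMU D ⟨d, hd⟩, hSS]
    norm_num
  | succ n ih =>
    intro σ hσl hσu C D hC hD
    have hσ0 : (0:ℝ) ≤ σ := by linarith
    have hσ1' : (0:ℝ) ≤ 1 - σ := by linarith
    -- slices and projections
    have memB : ∀ (E : Finset (Cube (n+1))) (y : Cube n),
        y ∈ slice true E ∪ slice false E → ∃ b, Fin.cons b y ∈ E := by
      intro E y hy
      rw [Finset.mem_union, mem_slice, mem_slice] at hy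
      rcases hy with h | h
      exacts [⟨true, h⟩, ⟨false, h⟩]
    have hBne : ∀ (E : Finset (Cube (n+1))), E.Nonempty →
        (slice true E ∪ slice false E).Nonempty := by
      intro E hE
      obtain ⟨y, hy⟩ := hE
      refine ⟨Fin.tail y, ?_⟩
      rw [Finset.mem_union, mem_slice, mem_slice]
      cases hb : y 0
      · right; rw [← hb, Fin.cons_self_tail]; exact hy
      · left; rw [← hb, Fin.cons_self_tail]; exact hy
    have hBC := hBne C hC
    have hBD := hBne D hD
    -- dd recursion bounds
    have hdd0 : ∀ z : Cube n, dd C D (Fin.cons false z)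
        ≤ dd (slice true C ∪ slice false C) (slice true D ∪ slice false D) z := by
      intro z
      obtain ⟨y, hy, y', hy', hcost⟩ := dd_attain hBC hBD z
      obtain ⟨b, hb⟩ := memB C y hy
      obtain ⟨b', hb'⟩ := memB D y' hy'
      calc dd C D (Fin.cons false z)
          ≤ cost (Fin.cons false z) (Fin.cons b y) (Fin.cons b' y') := dd_le hb hb' _
        _ = cost z y y' := by rw [cost_cons]; simp
        _ = _ := hcost
    have hdd1 : ∀ z : Cube n, dd C D (Fin.cons true z)
        ≤ dd (slice true C ∪ slice false C) (slice true D ∪ slice false D) z + 1 := by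
      intro z
      obtain ⟨y, hy, y', hy', hcost⟩ := dd_attain hBC hBD z
      obtain ⟨b, hb⟩ := memB C y hy
      obtain ⟨b', hb'⟩ := memB D y' hy'
      calc dd C D (Fin.cons true z)
          ≤ cost (Fin.cons true z) (Fin.cons b y) (Fin.cons b' y') := dd_le hb hb' _
        _ ≤ 1 + cost z y y' := by rw [cost_cons]; split <;> omega
        _ = _ := by rw [hcost]; omega
    have hdd1C : (slice true C).Nonempty → ∀ z : Cube n, dd C D (Fin.cons true z)
        ≤ dd (slice true C) (slice true D ∪ slice false D) z := by
      intro h1 z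
      obtain ⟨y, hy, y', hy', hcost⟩ := dd_attain h1 hBD z
      obtain ⟨b', hb'⟩ := memB D y' hy'
      have hyC : Fin.cons true y ∈ C := mem_slice.mp hy
      calc dd C D (Fin.cons true z)
          ≤ cost (Fin.cons true z) (Fin.cons true y) (Fin.cons b' y') := dd_le hyC hb' _
        _ = cost z y y' := by rw [cost_cons]; simp
        _ = _ := hcost
    have hdd1D : (slice true D).Nonempty → ∀ z : Cube n, dd C D (Fin.cons true z)
        ≤ dd (slice true C ∪ slice false C) (slice true D) z := by
      intro h1 z
      obtain ⟨y, hy, y', hy', hcost⟩ := dd_attain hBC h1 z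
      obtain ⟨b, hb⟩ := memB C y hy
      have hyD : Fin.cons true y' ∈ D := mem_slice.mp hy'
      calc dd C D (Fin.cons true z)
          ≤ cost (Fin.cons true z) (Fin.cons b y) (Fin.cons true y') := dd_le hb hyD _
        _ = cost z y y' := by rw [cost_cons]; simp
        _ = _ := hcost
    -- weights nonneg
    have hw : ∀ z : Cube n, 0 ≤ cubeWeight n (1-σ) z :=
      fun z => cubeWeight_nonneg (by linarith) (by linarith) z
    -- E quantities
    have hE0le : (∑ z : Cube n, cubeWeight n (1-σ) z * 2 ^ dd C D (Fin.cons false z))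
        ≤ SS n σ (slice true C ∪ slice false C) (slice true D ∪ slice false D) := by
      apply Finset.sum_le_sum
      intro z _
      exact mul_le_mul_of_nonneg_left (pow_le_pow_right₀ one_le_two (hdd0 z)) (hw z)
    have hE1le2 : (∑ z : Cube n, cubeWeight n (1-σ) z * 2 ^ dd C D (Fin.cons true z))
        ≤ 2 * SS n σ (slice true C ∪ slice false C) (slice true D ∪ slice false D) := by
      unfold SS
      rw [Finset.mul_sum]
      apply Finset.sum_le_sum
      intro z _
      calc cubeWeight n (1-σ) z * 2 ^ dd C D (Fin.cons true z)
          ≤ cubeWeight n (1-σ) z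
            * 2 ^ (dd (slice true C ∪ slice false C) (slice true D ∪ slice false D) z + 1) :=
            mul_le_mul_of_nonneg_left (pow_le_pow_right₀ one_le_two (hdd1 z)) (hw z)
        _ = 2 * (cubeWeight n (1-σ) z
            * 2 ^ dd (slice true C ∪ slice false C) (slice true D ∪ slice false D) z) := by
            ring
    have hE1leC : (slice true C).Nonempty →
        (∑ z : Cube n, cubeWeight n (1-σ) z * 2 ^ dd C D (Fin.cons true z))
        ≤ SS n σ (slice true C) (slice true D ∪ slice false D) := by
      intro h1
      apply Finset.sum_le_sum
      intro z _
      exact mul_le_mul_of_nonneg_left (pow_le_pow_right₀ one_le_two (hdd1C h1 z)) (hw z)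
    have hE1leD : (slice true D).Nonempty →
        (∑ z : Cube n, cubeWeight n (1-σ) z * 2 ^ dd C D (Fin.cons true z))
        ≤ SS n σ (slice true C ∪ slice false C) (slice true D) := by
      intro h1
      apply Finset.sum_le_sum
      intro z _
      exact mul_le_mul_of_nonneg_left (pow_le_pow_right₀ one_le_two (hdd1D h1 z)) (hw z)
    have hE0nn : 0 ≤ ∑ z : Cube n, cubeWeight n (1-σ) z * 2 ^ dd C D (Fin.cons false z) :=
      Finset.sum_nonneg fun z _ => mul_nonneg (hw z) (by positivity)
    have hE1nn : 0 ≤ ∑ z : Cube n, cubeWeight n (1-σ) z * 2 ^ dd C D (Fin.cons true z) :=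
      Finset.sum_nonneg fun z _ => mul_nonneg (hw z) (by positivity)
    -- IH for the union pair
    have hIH := ih σ hσl hσu _ _ hBC hBD
    -- set up core
    rw [MU_succ σ C, MU_succ σ D, SS_succ σ C D]
    have hsub1C : slice true C ⊆ slice true C ∪ slice false C := Finset.subset_union_left
    have hsub0C : slice false C ⊆ slice true C ∪ slice false C := Finset.subset_union_right
    have hsub1D : slice true D ⊆ slice true D ∪ slice false D := Finset.subset_union_left
    have hsub0D : slice false D ⊆ slice true D ∪ slice false D := Finset.subset_union_right
    apply core hσl hσu
      (MU_nonneg hσ0 hσu _) (MU_nonneg hσ0 hσu _) (MU_nonneg hσ0 hσu _) (MU_nonneg hσ0 hσu _)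
      (MU_mono hσ0 hσu hsub0C) (MU_mono hσ0 hσu hsub1C)
      (MU_mono hσ0 hσu hsub0D) (MU_mono hσ0 hσu hsub1D)
      hE0nn hE1nn (SS_nonneg hσ0 hσu _ _) hE0le hE1le2 hIH
    · -- C1 : empty or facts
      rcases Finset.eq_empty_or_nonempty (slice true C) with he | hne
      · left; rw [he, MU_empty]
      · right
        exact ⟨SS_nonneg hσ0 hσu _ _, hE1leC hne, ih σ hσl hσu _ _ hne hBD⟩
    · rcases Finset.eq_empty_or_nonempty (slice true D) with he | hne
      · left; rw [he, MU_empty]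
      · right
        exact ⟨SS_nonneg hσ0 hσu _ _, hE1leD hne, ih σ hσl hσu _ _ hBC hne⟩

def notEquiv (n : ℕ) : Cube n ≃ Cube n :=
  ⟨fun x i => !(x i), fun x i => !(x i),
   fun x => by funext i; simp, fun x => by funext i; simp⟩

@[simp] lemma notEquiv_apply {n : ℕ} (x : Cube n) : notEquiv n x = fun i => !(x i) := rfl

lemma cubeWeight_not {n : ℕ} (σ : ℝ) (x : Cube n) :
    cubeWeight n (1-σ) (fun i => !(x i)) = cubeWeight n σ x := by
  unfold cubeWeight
  apply Finset.prod_congr rfl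
  intro i _
  cases hxi : x i <;> simp [hxi] <;> ring

end CubeConc

open CubeConc

/-- **Concentration inequality, case `1/2 ≤ σ ≤ 1`** (Lemma 2.4): if
`f : {0,1}^n → ℝ₊` is monotone, sub-additive and 1-Lipschitz with `f(0) = 0` and
`f(1) = r`, then `Pr_{x∼π_σ^n}[f(x) ≤ r/6] ≤ √2·2^{-r/12}`. -/
theorem concentration_large_sigma (n : ℕ) (σ r : ℝ) (hσ0 : 1 / 2 ≤ σ) (hσ1 : σ ≤ 1)
    (f : (Fin n → Bool) → ℝ)
    (hnn : ∀ x, 0 ≤ f x)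
    (hmono : CubeMonotone f) (hsub : CubeSubadditive f) (hlip : CubeLipschitz f)
    (h0 : f (fun _ => false) = 0) (h1 : f (fun _ => true) = r) :
    cubePr n σ (fun x => f x ≤ r / 6) ≤ Real.sqrt 2 * (2 : ℝ) ^ (-(r / 12)) := by
  classical
  have hσnn : (0:ℝ) ≤ σ := by linarith
  have hr0 : 0 ≤ r := h1 ▸ hnn _
  set Dset : Finset (Fin n → Bool) := Finset.univ.filter (fun x => f x ≤ r/6) with hDset
  have hp_eq : cubePr n σ (fun x => f x ≤ r / 6) = MU n σ Dset := by
    unfold cubePr MU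
    apply Finset.sum_congr rfl
    intro x _
    refine if_congr ?_ rfl rfl
    simp [hDset]
  have hDne : Dset.Nonempty := by
    refine ⟨(fun _ => false), ?_⟩
    rw [hDset, Finset.mem_filter]
    exact ⟨Finset.mem_univ _, by rw [h0]; linarith⟩
  -- pointwise cost lower bound
  have costLB : ∀ x ∈ Dset, ∀ y ∈ Dset, ∀ y' ∈ Dset,
      r/2 ≤ (cost (fun i => !(x i)) y y' : ℝ) := by
    intro x hx y hy y' hy'
    rw [hDset, Finset.mem_filter] at hx hy hy'
    have hfx := hx.2
    have hfy := hy.2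
    have hfy' := hy'.2
    have hdisj : ∀ i, ¬(x i = true ∧ (!(x i)) = true) := by
      rintro i ⟨h1', h2'⟩; simp [h1'] at h2'
    have hcomp : (fun i => x i || !(x i)) = (fun _ : Fin n => true) := by
      funext i; simp
    have h_r : r ≤ f x + f (fun i => !(x i)) := by
      have hh := hsub x (fun i => !(x i)) hdisj
      rw [hcomp, h1] at hh; exact hh
    have sA : f (fun i => y i || y' i) ≤ f y + f y' := by
      have hd2 : ∀ i, ¬(y i = true ∧ (y' i && !(y i)) = true) := by
        rintro i ⟨a, b⟩; simp [a] at b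
      have heq : (fun i => y i || (y' i && !(y i))) = (fun i => y i || y' i) := by
        funext i; cases hyi : y i <;> simp
      have h5 := hsub y (fun i => y' i && !(y i)) hd2
      rw [heq] at h5
      have h6 : f (fun i => y' i && !(y i)) ≤ f y' := by
        apply hmono
        intro i hi
        simp only [Bool.and_eq_true] at hi
        exact hi.1
      linarith
    have sB : f (fun i => !(x i) && !(y i || y' i)) ≤ (cost (fun i => !(x i)) y y' : ℝ) := by
      have h7 := hlip (fun i => !(x i) && !(y i || y' i)) (fun _ => false)
      rw [h0, sub_zero, abs_of_nonneg (hnn _)] at h7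
      refine le_trans h7 ?_
      have hcard : (Finset.univ.filter fun i => (!(x i) && !(y i || y' i)) ≠ (fun _ : Fin n => false) i)
          = Finset.univ.filter fun i => (fun j => !(x j)) i = true ∧ y i = false ∧ y' i = false := by
        apply Finset.filter_congr
        intro i _
        cases hxi : x i <;> cases hyi : y i <;> cases hyi' : y' i <;> simp [hxi, hyi, hyi']
      rw [hcard]
      rfl
    have sNx : f (fun i => !(x i)) ≤ f y + f y' + (cost (fun i => !(x i)) y y' : ℝ) := by
      have hmono1 : f (fun i => !(x i))
          ≤ f (fun i => (y i || y' i) || (!(x i) && !(y i || y' i))) := by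
        apply hmono
        intro i hi
        cases hA : (y i || y' i) <;> simp [hA, hi]
      have hd3 : ∀ i, ¬((y i || y' i) = true ∧ (!(x i) && !(y i || y' i)) = true) := by
        rintro i ⟨a, b⟩; simp [a] at b
      have hsub3 := hsub (fun i => y i || y' i) (fun i => !(x i) && !(y i || y' i)) hd3
      linarith
    linarith
  have hddLB : ∀ x ∈ Dset, r/2 ≤ ((dd Dset Dset (fun i => !(x i)) : ℕ) : ℝ) := by
    intro x hx
    obtain ⟨y, hy, y', hy', hc⟩ := dd_attain hDne hDne (fun i => !(x i))
    rw [← hc]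
    exact costLB x hx y hy y' hy'
  -- Markov
  have hpoint : ∀ x, (if x ∈ Dset then cubeWeight n σ x else 0)
      ≤ cubeWeight n σ x * 2 ^ dd Dset Dset (fun i => !(x i)) * (2:ℝ) ^ (-(r/2)) := by
    intro x
    have hwx : 0 ≤ cubeWeight n σ x := cubeWeight_nonneg hσnn hσ1 x
    by_cases hx : x ∈ Dset
    · rw [if_pos hx]
      have h1' : (2:ℝ) ^ (r/2 : ℝ) ≤ (2:ℝ) ^ ((dd Dset Dset (fun i => !(x i)) : ℕ) : ℝ) :=
        Real.rpow_le_rpow_of_exponent_le one_le_two (hddLB x hx)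
      have e : (2:ℝ)^(r/2 : ℝ) * (2:ℝ)^(-(r/2) : ℝ) = 1 := by
        rw [← Real.rpow_add two_pos]; norm_num
      have hposr : (0:ℝ) < (2:ℝ)^(-(r/2) : ℝ) := Real.rpow_pos_of_pos two_pos _
      have h2' : (1:ℝ) ≤ (2:ℝ) ^ ((dd Dset Dset (fun i => !(x i)) : ℕ) : ℝ) * (2:ℝ)^(-(r/2)) := by
        calc (1:ℝ) = (2:ℝ)^(r/2 : ℝ) * (2:ℝ)^(-(r/2) : ℝ) := e.symm
          _ ≤ _ := mul_le_mul_of_nonneg_right h1' hposr.le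
      have hcast : ((2:ℝ) ^ dd Dset Dset (fun i => !(x i)) : ℝ)
          = (2:ℝ) ^ ((dd Dset Dset (fun i => !(x i)) : ℕ) : ℝ) :=
        (Real.rpow_natCast 2 _).symm
      calc cubeWeight n σ x = cubeWeight n σ x * 1 := (mul_one _).symm
        _ ≤ cubeWeight n σ x * ((2:ℝ) ^ dd Dset Dset (fun i => !(x i)) * (2:ℝ)^(-(r/2))) := by
            apply mul_le_mul_of_nonneg_left _ hwx
            rw [hcast]; exact h2'
        _ = _ := (mul_assoc _ _ _).symm
    · rw [if_neg hx]
      positivity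
  have hsum1 : MU n σ Dset
      ≤ (∑ x : Fin n → Bool, cubeWeight n σ x * 2 ^ dd Dset Dset (fun i => !(x i)))
        * (2:ℝ)^(-(r/2)) := by
    rw [Finset.sum_mul]
    exact Finset.sum_le_sum fun x _ => hpoint x
  have hre : (∑ x : Fin n → Bool, cubeWeight n σ x * 2 ^ dd Dset Dset (fun i => !(x i)))
      = SS n σ Dset Dset := by
    unfold SS
    rw [← Equiv.sum_comp (notEquiv n) (fun z => cubeWeight n (1-σ) z * 2 ^ dd Dset Dset z)]
    apply Finset.sum_congr rfl
    intro x _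
    simp only [notEquiv_apply]
    rw [cubeWeight_not]
  have hT2 := T2 n σ hσ0 hσ1 Dset Dset hDne hDne
  have hp0 : 0 ≤ MU n σ Dset := MU_nonneg hσnn hσ1 _
  have hposr : (0:ℝ) < (2:ℝ)^(-(r/2) : ℝ) := Real.rpow_pos_of_pos two_pos _
  have hp3 : (MU n σ Dset)^3 ≤ (2:ℝ)^(-(r/2)) := by
    have h1'' : MU n σ Dset ≤ SS n σ Dset Dset * (2:ℝ)^(-(r/2)) := by
      rw [← hre]; exact hsum1
    calc (MU n σ Dset)^3 = (MU n σ Dset * MU n σ Dset) * MU n σ Dset := by ring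
      _ ≤ (MU n σ Dset * MU n σ Dset) * (SS n σ Dset Dset * (2:ℝ)^(-(r/2))) :=
          mul_le_mul_of_nonneg_left h1'' (by positivity)
      _ = (MU n σ Dset * MU n σ Dset * SS n σ Dset Dset) * (2:ℝ)^(-(r/2)) := by ring
      _ ≤ 1 * (2:ℝ)^(-(r/2)) := mul_le_mul_of_nonneg_right hT2 hposr.le
      _ = (2:ℝ)^(-(r/2)) := one_mul _
  have hp6 : MU n σ Dset ≤ (2:ℝ)^(-(r/6)) := by
    have h3 : ((MU n σ Dset)^(3:ℕ) : ℝ)^((3:ℝ)⁻¹) ≤ ((2:ℝ)^(-(r/2) : ℝ))^((3:ℝ)⁻¹) :=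
      Real.rpow_le_rpow (by positivity) hp3 (by norm_num)
    have hL : ((MU n σ Dset)^(3:ℕ) : ℝ)^((3:ℝ)⁻¹) = MU n σ Dset := by
      rw [← Real.rpow_natCast (MU n σ Dset) 3, ← Real.rpow_mul hp0]
      norm_num
    have hR : ((2:ℝ)^(-(r/2) : ℝ))^((3:ℝ)⁻¹) = (2:ℝ)^(-(r/6) : ℝ) := by
      rw [← Real.rpow_mul (by norm_num : (0:ℝ) ≤ 2)]
      congr 1
      ring
    rwa [hL, hR] at h3
  have hfin : (2:ℝ)^(-(r/6)) ≤ Real.sqrt 2 * (2:ℝ)^(-(r/12)) := by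
    have hsq : (1:ℝ) ≤ Real.sqrt 2 := by
      rw [show (1:ℝ) = Real.sqrt 1 from (Real.sqrt_one).symm]
      exact Real.sqrt_le_sqrt (by norm_num)
    have hmono2 : (2:ℝ)^(-(r/6) : ℝ) ≤ (2:ℝ)^(-(r/12) : ℝ) :=
      Real.rpow_le_rpow_of_exponent_le one_le_two (by linarith)
    calc (2:ℝ)^(-(r/6) : ℝ) ≤ (2:ℝ)^(-(r/12) : ℝ) := hmono2
      _ = 1 * (2:ℝ)^(-(r/12) : ℝ) := (one_mul _).symm
      _ ≤ Real.sqrt 2 * (2:ℝ)^(-(r/12) : ℝ) :=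
          mul_le_mul_of_nonneg_right hsq (by positivity)
  rw [hp_eq]
  exact le_trans hp6 hfin
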